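/- Over C_n, let 0 → M' → E → N → 0 be a non-split short exact sequence of modules with M' indecomposable, N indecomposable. Then there exists an indecomposable direct summand U of E such that M' embeds into U and U surjects onto N. -/

import Mathlib

set_option maxSynthPendingDepth 3

open Function
open Function

section Core
variable (Λ : Type) [Ring Λ]

/-- The submodule lattice of `M` is a chain (`M` is uniserial). -/
def IsUniserialModule (M : Type) [AddCommGroup M] [Module Λ M] : Prop :=
  ∀ N N' : Submodule Λ M, N ≤ N' ∨ N' ≤ N

/-- `M` is an indecomposable module. -/
def IsIndecModule (M : Type) [AddCommGroup M] [Module Λ M] : Prop :=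
  Nontrivial M ∧ ∀ N N' : Submodule Λ M, IsCompl N N' → N = ⊥ ∨ N' = ⊥

/-- `Λ` is a Nakayama algebra: every finite indecomposable module is uniserial. -/
def IsNakayama : Prop :=
  ∀ (M : Type) [AddCommGroup M] [Module Λ M], Module.Finite Λ M →
    IsIndecModule Λ M → IsUniserialModule Λ M

/-- `N` is generated by `M`: an epimorphic image of a finite direct sum of copies of `M`. -/
def InGen (M N : Type) [AddCommGroup M] [Module Λ M] [AddCommGroup N] [Module Λ N] : Prop :=
  ∃ (m : ℕ) (f : (Fin m → M) →ₗ[Λ] N), Surjective f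

/-- `N` is cogenerated by `M`: embeds into a finite direct sum of copies of `M`. -/
def InCogen (M N : Type) [AddCommGroup M] [Module Λ M] [AddCommGroup N] [Module Λ N] : Prop :=
  ∃ (m : ℕ) (f : N →ₗ[Λ] (Fin m → M)), Injective f

/-- `Ext¹_Λ(N, M') = 0`: every short exact sequence `0 → M' → E → N → 0` splits. -/
def Ext1Zero (N M' : Type) [AddCommGroup N] [Module Λ N] [AddCommGroup M'] [Module Λ M'] : Prop :=
  ∀ (E : Type) [AddCommGroup E] [Module Λ E] (f : M' →ₗ[Λ] E) (g : E →ₗ[Λ] N),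
    Injective f → Surjective g → LinearMap.range f = LinearMap.ker g →
      ∃ s : N →ₗ[Λ] E, g.comp s = LinearMap.id

/-- `Hom_Λ(M, N) = 0`. -/
def Hom0 (M N : Type) [AddCommGroup M] [Module Λ M] [AddCommGroup N] [Module Λ N] : Prop :=
  ∀ f : M →ₗ[Λ] N, f = 0

/-- `Hom_Λ(M, τN) = 0`, encoded via the Auslander–Smalø criterion:
`Ext¹(N, Gen M) = 0`. -/
def HomTauVanish (M N : Type) [AddCommGroup M] [Module Λ M] [AddCommGroup N] [Module Λ N] : Prop :=
  ∀ (M' : Type) [AddCommGroup M'] [Module Λ M'], InGen Λ M M' → Ext1Zero Λ N M'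

/-- `M` is τ-rigid: `Hom(M, τM) = 0`. -/
def IsTauRigid (M : Type) [AddCommGroup M] [Module Λ M] : Prop :=
  HomTauVanish Λ M M

/-- `Y` lies in the τ-perpendicular category `J(X) = X^⊥ ∩ ⊥(τX)`. -/
def InJ (X Y : Type) [AddCommGroup X] [Module Λ X] [AddCommGroup Y] [Module Λ Y] : Prop :=
  Hom0 Λ X Y ∧ HomTauVanish Λ Y X

/-- `X` is (isomorphic to) a direct summand of `N`. -/
def SummandOf (X N : Type) [AddCommGroup X] [Module Λ X] [AddCommGroup N] [Module Λ N] : Prop :=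
  ∃ (C : Type) (_ : AddCommGroup C), ∃ (_ : Module Λ C), Nonempty (N ≃ₗ[Λ] X × C)

/-- `X ∈ add M`. -/
def InAdd (X M : Type) [AddCommGroup X] [Module Λ X] [AddCommGroup M] [Module Λ M] : Prop :=
  ∃ m : ℕ, SummandOf Λ X (Fin m → M)

/-- The length of a module, as the Krull dimension of its submodule lattice. -/
noncomputable def modLength (M : Type) [AddCommGroup M] [Module Λ M] : WithBot ℕ∞ :=
  Order.krullDim (Submodule Λ M)

end Core

section CnDefs
variable (k : Type) [Field k] (n : ℕ)

/-- Shift a vertex of the cyclic quiver `i ↦ i + t (mod n)`. -/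
def finShift {n : ℕ} (i : Fin n) (t : ℕ) : Fin n := ⟨(i + t) % n, Nat.mod_lt _ i.pos⟩

/-- Generators of the path algebra of the cyclic quiver `Δ_n`:
`Sum.inl i` is the trivial path at vertex `i`, `Sum.inr i` the arrow `a_i : i → i - 1`. -/
abbrev CnGen (n : ℕ) : Type := (Fin n) ⊕ (Fin n)

/-- The path of length `n` (full cycle) ending at vertex `i`:
`a_{i+1} ⋯ a_{i-1} a_i` (written with the leftmost factor the last arrow). -/
noncomputable def cnCycle (i : Fin n) : FreeAlgebra k (CnGen n) :=
  ((List.range n).map (fun t => FreeAlgebra.ι k (Sum.inr (finShift i (t + 1))))).prod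

/-- Relations defining `C_n = kΔ_n / r^n`: the path algebra relations of the cyclic
quiver (orthogonal idempotents summing to one, arrow incidence) together with the
vanishing of all paths of length `n`. -/
inductive CnRel : FreeAlgebra k (CnGen n) → FreeAlgebra k (CnGen n) → Prop
  | idem (i : Fin n) :
      CnRel (FreeAlgebra.ι k (Sum.inl i) * FreeAlgebra.ι k (Sum.inl i)) (FreeAlgebra.ι k (Sum.inl i))
  | orth (i j : Fin n) (h : i ≠ j) :
      CnRel (FreeAlgebra.ι k (Sum.inl i) * FreeAlgebra.ι k (Sum.inl j)) 0
  | unit : CnRel (∑ i : Fin n, FreeAlgebra.ι k (Sum.inl i)) 1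
  | arrow_tgt (i : Fin n) :
      CnRel (FreeAlgebra.ι k (Sum.inl (finShift i (n - 1))) * FreeAlgebra.ι k (Sum.inr i))
        (FreeAlgebra.ι k (Sum.inr i))
  | arrow_src (i : Fin n) :
      CnRel (FreeAlgebra.ι k (Sum.inr i) * FreeAlgebra.ι k (Sum.inl i)) (FreeAlgebra.ι k (Sum.inr i))
  | cycle (i : Fin n) : CnRel (cnCycle k n i) 0

/-- The cyclic Nakayama algebra `C_n = kΔ_n / r^n`. -/
abbrev CnAlg : Type := RingQuot (CnRel k n)

/-- The idempotent `e_i ∈ C_n` at vertex `i`. -/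
noncomputable def cnIdem (i : Fin n) : CnAlg k n :=
  RingQuot.mkAlgHom k (CnRel k n) (FreeAlgebra.ι k (Sum.inl i))

/-- The indecomposable projective `P(i) = C_n e_i`. -/
noncomputable def cnProj (i : Fin n) : Submodule (CnAlg k n) (CnAlg k n) :=
  Submodule.span (CnAlg k n) {cnIdem k n i}

end CnDefs

/-- The Jacobson radical of a ring. -/
noncomputable def radIdeal (Λ : Type) [Ring Λ] : Ideal Λ := Ideal.jacobson ⊥

/-- The `i`-th radical power `rad^i M` of a module, as a submodule. -/
noncomputable def radPow (Λ : Type) [Ring Λ] (i : ℕ) (M : Type) [AddCommGroup M]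
    [Module Λ M] : Submodule Λ M :=
  (radIdeal Λ) ^ i • (⊤ : Submodule Λ M)

/-- The top `M / rad M` of a module. -/
abbrev topOf (Λ : Type) [Ring Λ] (M : Type) [AddCommGroup M] [Module Λ M] : Type :=
  M ⧸ radPow Λ 1 M

/-- The indecomposable `C_n`-module `M^t_l = P(t)/rad^l P(t)`, with top `S(t)`
and length `l` (for `l ≤ n`). -/
noncomputable abbrev cnMod (k : Type) [Field k] (n : ℕ) (t : Fin n) (l : ℕ) : Type :=
  (↥(cnProj k n t)) ⧸ (radPow (CnAlg k n) l (↥(cnProj k n t)))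

set_option linter.unusedSectionVars false

namespace CnProof
open Fin.NatCast Fin.CommRing
variable (k : Type) [Field k] (n : ℕ)

noncomputable def eIdem (i : Fin n) : CnAlg k n :=
  RingQuot.mkAlgHom k (CnRel k n) (FreeAlgebra.ι k (Sum.inl i))

noncomputable def bArr (i : Fin n) : CnAlg k n :=
  RingQuot.mkAlgHom k (CnRel k n) (FreeAlgebra.ι k (Sum.inr i))

noncomputable def aOp : CnAlg k n := ∑ i, bArr k n i

variable {k n}

lemma finShift_eq [NeZero n] (i : Fin n) (t : ℕ) : finShift i t = i + (t : Fin n) := by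
  ext
  simp [finShift, Fin.add_def, Fin.val_natCast, Nat.add_mod]

lemma finShift_pred [NeZero n] (i : Fin n) : finShift i (n - 1) = i - 1 := by
  rw [finShift_eq]
  have h : ((n - 1 : ℕ) : Fin n) = -1 := by
    have h1 : (1:ℕ) ≤ n := Nat.one_le_iff_ne_zero.mpr (NeZero.ne n)
    have := Nat.cast_sub (R := Fin n) h1
    rw [this, Fin.natCast_self, Nat.cast_one, zero_sub]
  rw [h, sub_eq_add_neg]

lemma e_mul_e (i : Fin n) : eIdem k n i * eIdem k n i = eIdem k n i := by
  rw [eIdem, ← map_mul]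
  exact RingQuot.mkAlgHom_rel k (@CnRel.idem k _ n i)

lemma e_mul_e_ne {i j : Fin n} (h : i ≠ j) : eIdem k n i * eIdem k n j = 0 := by
  rw [eIdem, eIdem, ← map_mul]
  have := RingQuot.mkAlgHom_rel k (@CnRel.orth k _ n i j h)
  simpa using this

lemma sum_e : ∑ i, eIdem k n i = 1 := by
  have := RingQuot.mkAlgHom_rel k (@CnRel.unit k _ n)
  simpa [eIdem, map_sum] using this

lemma e_mul_b [NeZero n] (i : Fin n) : eIdem k n (i - 1) * bArr k n i = bArr k n i := by
  have := RingQuot.mkAlgHom_rel k (@CnRel.arrow_tgt k _ n i)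
  rw [map_mul] at this
  rw [← finShift_pred i]
  exact this

lemma b_mul_e (i : Fin n) : bArr k n i * eIdem k n i = bArr k n i := by
  have := RingQuot.mkAlgHom_rel k (@CnRel.arrow_src k _ n i)
  rw [map_mul] at this
  exact this

lemma e_mul_b_ne [NeZero n] {j i : Fin n} (h : j ≠ i - 1) : eIdem k n j * bArr k n i = 0 := by
  rw [← e_mul_b i, ← mul_assoc, e_mul_e_ne h, zero_mul]

lemma b_mul_e_ne {i j : Fin n} (h : j ≠ i) : bArr k n i * eIdem k n j = 0 := by
  rw [← b_mul_e i, mul_assoc, e_mul_e_ne (Ne.symm h), mul_zero]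

lemma cycle_eq_zero (i : Fin n) :
    RingQuot.mkAlgHom k (CnRel k n) (cnCycle k n i) = 0 := by
  have := RingQuot.mkAlgHom_rel k (@CnRel.cycle k _ n i)
  simpa using this


section ModuleLemmas
variable [NeZero n] {M : Type} [AddCommGroup M] [Module (CnAlg k n) M]

variable (k n) in
/-- `x` is homogeneous of degree `d`. -/
def Homog (d : Fin n) (x : M) : Prop := eIdem k n d • x = x

lemma sum_e_smul (x : M) : ∑ i, eIdem k n i • x = x := by
  rw [← Finset.sum_smul, sum_e, one_smul]

lemma Homog.e_smul_ne {d c : Fin n} {x : M} (h : Homog k n d x) (hc : c ≠ d) :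
    eIdem k n c • x = 0 := by
  rw [← h, ← mul_smul, e_mul_e_ne hc, zero_smul]

lemma Homog.b_smul_ne {d : Fin n} {x : M} (h : Homog k n d x) {j : Fin n} (hj : j ≠ d) :
    bArr k n j • x = 0 := by
  rw [← h, ← mul_smul, b_mul_e_ne (i := j) (j := d) hj.symm, zero_smul]

lemma Homog.a_smul {d : Fin n} {x : M} (h : Homog k n d x) :
    aOp k n • x = bArr k n d • x := by
  rw [aOp, Finset.sum_smul]
  rw [Finset.sum_eq_single d]
  · intro j _ hj
    exact h.b_smul_ne hj
  · intro hd
    exact absurd (Finset.mem_univ d) hd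

lemma Homog.b_smul {d : Fin n} {x : M} (h : Homog k n d x) :
    Homog k n (d - 1) (bArr k n d • x) := by
  unfold Homog
  rw [← mul_smul, e_mul_b]

lemma Homog.a_smul_homog {d : Fin n} {x : M} (h : Homog k n d x) :
    Homog k n (d - 1) (aOp k n • x) := by
  rw [h.a_smul]; exact h.b_smul

lemma Homog.a_pow_smul_homog {d : Fin n} {x : M} (h : Homog k n d x) (m : ℕ) :
    Homog k n (d - (m : Fin n)) (aOp k n ^ m • x) := by
  induction m with
  | zero => simpa using h
  | succ m ih =>
      have : aOp k n ^ (m + 1) • x = aOp k n • (aOp k n ^ m • x) := by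
        rw [← mul_smul, pow_succ']
      have h2 : d - ((m + 1 : ℕ) : Fin n) = d - (m : Fin n) - 1 := by push_cast; ring
      rw [this, h2]
      exact ih.a_smul_homog

/-- The path of length `m` ending at `d - m`, beginning at `d`, as left-multiplication. -/
noncomputable def pathEl : ℕ → Fin n → CnAlg k n
  | 0, _ => 1
  | (m+1), d => pathEl m (d - 1) * bArr k n d

lemma Homog.a_pow_smul_eq_path {d : Fin n} {x : M} (h : Homog k n d x) (m : ℕ) :
    aOp k n ^ m • x = pathEl (k := k) (n := n) m d • x := by
  induction m generalizing d x with
  | zero => simp [pathEl]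
  | succ m ih =>
      have h1 : aOp k n ^ (m + 1) • x = aOp k n ^ m • (aOp k n • x) := by
        rw [← mul_smul, pow_succ]
      rw [h1, h.a_smul]
      rw [ih h.b_smul]
      rw [pathEl, mul_smul]

/-- Partial cycle products. -/
noncomputable def cList (m : ℕ) (j : Fin n) : CnAlg k n :=
  ((List.range m).map (fun t => bArr k n (j + ((t + 1 : ℕ) : Fin n)))).prod

lemma cList_succ (m : ℕ) (j : Fin n) :
    cList (k := k) (n := n) (m + 1) j = cList m j * bArr k n (j + ((m + 1 : ℕ) : Fin n)) := by
  rw [cList, cList, List.range_succ, List.map_append, List.prod_append]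
  simp

lemma pathEl_eq_cList (m : ℕ) (i : Fin n) :
    pathEl (k := k) (n := n) m i = cList m (i - (m : Fin n)) := by
  induction m generalizing i with
  | zero => simp [pathEl, cList]
  | succ m ih =>
      rw [pathEl, ih, cList_succ]
      congr 1
      · congr 1
        push_cast
        ring
      · congr 1
        push_cast
        ring

lemma cList_n_eq_cycle (i : Fin n) :
    cList (k := k) (n := n) n i = RingQuot.mkAlgHom k (CnRel k n) (cnCycle k n i) := by
  rw [cnCycle, map_list_prod, List.map_map, cList]
  congr 1
  apply List.map_congr_left
  intro t ht
  simp only [comp_apply]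
  rw [bArr, finShift_eq]

lemma pathEl_n_eq_zero (i : Fin n) : pathEl (k := k) (n := n) n i = 0 := by
  rw [pathEl_eq_cList, Fin.natCast_self, sub_zero, cList_n_eq_cycle, cycle_eq_zero]

lemma a_pow_n_smul (x : M) : aOp k n ^ n • x = 0 := by
  have : x = ∑ i, eIdem k n i • x := (sum_e_smul x).symm
  rw [this, Finset.smul_sum]
  apply Finset.sum_eq_zero
  intro i _
  have hi : Homog k n i (eIdem k n i • x) := by
    unfold Homog
    rw [← mul_smul, e_mul_e]
  rw [hi.a_pow_smul_eq_path, pathEl_n_eq_zero, zero_smul]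

lemma a_pow_smul_of_le {l m : ℕ} (h : n ≤ m) (x : M) : aOp k n ^ m • x = 0 := by
  have : aOp k n ^ m • x = aOp k n ^ (m - n) • (aOp k n ^ n • x) := by
    rw [← mul_smul, ← pow_add, Nat.sub_add_cancel h]
  rw [this, a_pow_n_smul, smul_zero]

end ModuleLemmas

section Span
variable [NeZero n]

lemma homog_e (i : Fin n) : Homog k n i (eIdem k n i) := by
  show _ • _ = _
  rw [smul_eq_mul, e_mul_e]

lemma a_pow_n_eq_zero : aOp k n ^ n = 0 := by
  have := a_pow_n_smul (k := k) (n := n) (M := CnAlg k n) 1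
  simpa using this

lemma a_mul_e (i : Fin n) : aOp k n * eIdem k n i = bArr k n i := by
  have h := (homog_e (k := k) (n := n) i).a_smul
  rw [smul_eq_mul, smul_eq_mul, b_mul_e] at h
  exact h

lemma homog_a_pow_e (j : ℕ) (i : Fin n) :
    Homog k n (i - (j : Fin n)) (aOp k n ^ j * eIdem k n i) := by
  have := (homog_e (k := k) (n := n) i).a_pow_smul_homog j
  rwa [smul_eq_mul] at this

variable (k n) in
noncomputable def spanT : Submodule k (CnAlg k n) :=
  Submodule.span k (Set.range (fun p : Fin n × Fin n => aOp k n ^ (p.1 : ℕ) * eIdem k n p.2))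

lemma a_pow_mul_e_mem (j : ℕ) (i : Fin n) : aOp k n ^ j * eIdem k n i ∈ spanT k n := by
  rcases lt_or_ge j n with hj | hj
  · apply Submodule.subset_span
    exact ⟨(⟨j, hj⟩, i), rfl⟩
  · have : aOp k n ^ j = aOp k n ^ (j - n) * aOp k n ^ n := by
      rw [← pow_add, Nat.sub_add_cancel hj]
    rw [this, a_pow_n_eq_zero, mul_zero, zero_mul]
    exact Submodule.zero_mem _

lemma e_mem (i : Fin n) : eIdem k n i ∈ spanT k n := by
  have := a_pow_mul_e_mem (k := k) (n := n) 0 i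
  rwa [pow_zero, one_mul] at this

lemma one_mem_spanT : (1 : CnAlg k n) ∈ spanT k n := by
  rw [← sum_e]
  exact Submodule.sum_mem _ (fun i _ => e_mem i)

lemma b_mem (i : Fin n) : bArr k n i ∈ spanT k n := by
  have := a_pow_mul_e_mem (k := k) (n := n) 1 i
  rwa [pow_one, a_mul_e] at this

lemma gen_mul_mem {x y : CnAlg k n} (hx : x ∈ spanT k n) (hy : y ∈ spanT k n) :
    x * y ∈ spanT k n := by
  induction hx using Submodule.span_induction with
  | mem x hxm =>
    induction hy using Submodule.span_induction with
    | mem y hym =>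
      obtain ⟨⟨j, i⟩, rfl⟩ := hxm
      obtain ⟨⟨j', i'⟩, rfl⟩ := hym
      have hh := homog_a_pow_e (k := k) (n := n) (j' : ℕ) i'
      by_cases hd : i = i' - ((j' : ℕ) : Fin n)
      · have : eIdem k n i * (aOp k n ^ (j' : ℕ) * eIdem k n i') =
            aOp k n ^ (j' : ℕ) * eIdem k n i' := by
          subst hd
          have := hh
          rwa [Homog, smul_eq_mul] at this
        rw [mul_assoc, this, ← mul_assoc, ← pow_add]
        exact a_pow_mul_e_mem _ _
      · have : eIdem k n i * (aOp k n ^ (j' : ℕ) * eIdem k n i') = 0 := by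
          have := hh.e_smul_ne hd
          rwa [smul_eq_mul] at this
        rw [mul_assoc, this, mul_zero]
        exact Submodule.zero_mem _
    | zero => rw [mul_zero]; exact Submodule.zero_mem _
    | add y z _ _ h1 h2 => rw [mul_add]; exact Submodule.add_mem _ h1 h2
    | smul t y _ h1 => rw [mul_smul_comm]; exact Submodule.smul_mem _ _ h1
  | zero => rw [zero_mul]; exact Submodule.zero_mem _
  | add x z _ _ h1 h2 => rw [add_mul]; exact Submodule.add_mem _ h1 h2
  | smul t x _ h1 => rw [smul_mul_assoc]; exact Submodule.smul_mem _ _ h1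

lemma spanT_eq_top : spanT k n = ⊤ := by
  rw [Submodule.eq_top_iff']
  intro r
  obtain ⟨z, rfl⟩ := RingQuot.mkAlgHom_surjective k (CnRel k n) r
  induction z using FreeAlgebra.induction with
  | grade0 t =>
      rw [AlgHom.commutes, Algebra.algebraMap_eq_smul_one]
      exact Submodule.smul_mem _ _ one_mem_spanT
  | grade1 x =>
      cases x with
      | inl i => exact e_mem i
      | inr i => exact b_mem i
  | mul x y hx hy => rw [map_mul]; exact gen_mul_mem hx hy
  | add x y hx hy => rw [map_add]; exact Submodule.add_mem _ hx hy

variable {M : Type} [AddCommGroup M] [Module (CnAlg k n) M]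

/-- Key representation: action of any algebra element on a homogeneous element. -/
lemma repr_smul {d : Fin n} {x : M} (h : Homog k n d x) (r : CnAlg k n) :
    ∃ c : Fin n → k, r • x =
      ∑ j : Fin n, algebraMap k (CnAlg k n) (c j) • (aOp k n ^ (j : ℕ) • x) := by
  have hr : r ∈ spanT k n := by rw [spanT_eq_top]; trivial
  induction hr using Submodule.span_induction with
  | mem r hm =>
      obtain ⟨⟨j, i⟩, rfl⟩ := hm
      have h' : eIdem k n d • x = x := h
      by_cases hd : i = d
      · subst hd
        refine ⟨fun j' => if j' = j then 1 else 0, ?_⟩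
        rw [Finset.sum_eq_single j]
        · show (aOp k n ^ (j : ℕ) * eIdem k n i) • x
            = algebraMap k (CnAlg k n) (if j = j then 1 else 0) • aOp k n ^ (j : ℕ) • x
          rw [if_pos rfl, map_one, one_smul, mul_smul, h']
        · intro j' _ hj'
          show algebraMap k (CnAlg k n) (if j' = j then 1 else 0) • aOp k n ^ (j' : ℕ) • x = 0
          rw [if_neg hj', map_zero, zero_smul]
        · intro hj; exact absurd (Finset.mem_univ j) hj
      · refine ⟨0, ?_⟩
        rw [mul_smul]
        rw [show eIdem k n i • x = 0 from (by
          have h2 : eIdem k n i • x = eIdem k n i • (eIdem k n d • x) := by rw [h']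
          rw [h2, ← mul_smul, e_mul_e_ne hd, zero_smul])]
        simp
  | zero => exact ⟨0, by simp⟩
  | add r s _ _ h1 h2 =>
      obtain ⟨c1, hc1⟩ := h1
      obtain ⟨c2, hc2⟩ := h2
      refine ⟨c1 + c2, ?_⟩
      rw [add_smul, hc1, hc2, ← Finset.sum_add_distrib]
      congr 1
      funext j
      rw [Pi.add_apply, map_add, add_smul]
  | smul t r _ h1 =>
      obtain ⟨c, hc⟩ := h1
      refine ⟨t • c, ?_⟩
      rw [Algebra.smul_def, mul_smul, hc, Finset.smul_sum]
      congr 1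
      funext j
      rw [Pi.smul_apply, smul_eq_mul, map_mul, mul_smul]

end Span

section Structure
variable [NeZero n] {M : Type} [AddCommGroup M] [Module (CnAlg k n) M]

lemma mem_span_homog {d : Fin n} {v : M} (h : Homog k n d v) {y : M}
    (hy : y ∈ Submodule.span (CnAlg k n) {v}) :
    ∃ c : Fin n → k, y =
      ∑ j : Fin n, algebraMap k (CnAlg k n) (c j) • (aOp k n ^ (j : ℕ) • v) := by
  obtain ⟨r, rfl⟩ := Submodule.mem_span_singleton.mp hy
  exact repr_smul h r

lemma e_smul_algebraMap (c : k) (i : Fin n) (z : M) :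
    eIdem k n i • (algebraMap k (CnAlg k n) c • z)
      = algebraMap k (CnAlg k n) c • (eIdem k n i • z) := by
  rw [← mul_smul, ← Algebra.commutes c, mul_smul]

lemma component_eq {d : Fin n} {v : M} (h : Homog k n d v) (c : Fin n → k) (j₀ : Fin n) :
    eIdem k n (d - j₀) • (∑ j : Fin n, algebraMap k (CnAlg k n) (c j) • (aOp k n ^ (j : ℕ) • v))
      = algebraMap k (CnAlg k n) (c j₀) • (aOp k n ^ (j₀ : ℕ) • v) := by
  rw [Finset.smul_sum]
  rw [Finset.sum_eq_single j₀]
  · have hh : Homog k n (d - j₀) (aOp k n ^ (j₀ : ℕ) • v) := by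
      have := h.a_pow_smul_homog (j₀ : ℕ)
      rwa [Fin.cast_val_eq_self] at this
    rw [e_smul_algebraMap, hh]
  · intro j _ hj
    have hh : Homog k n (d - j) (aOp k n ^ (j : ℕ) • v) := by
      have := h.a_pow_smul_homog (j : ℕ)
      rwa [Fin.cast_val_eq_self] at this
    have hne : d - j₀ ≠ d - j := by
      intro hc
      exact hj (sub_right_injective hc).symm
    rw [e_smul_algebraMap, hh.e_smul_ne hne, smul_zero]
  · intro hj; exact absurd (Finset.mem_univ j₀) hj

lemma socle_mem {d : Fin n} {v : M} (h : Homog k n d v) {m : ℕ}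
    (hm1 : aOp k n ^ (m + 1) • v = 0)
    {K : Submodule (CnAlg k n) M} (hK : K ≤ Submodule.span (CnAlg k n) {v})
    (hKb : K ≠ ⊥) : aOp k n ^ m • v ∈ K := by
  obtain ⟨y, hyK, hy0⟩ := (Submodule.ne_bot_iff K).mp hKb
  obtain ⟨c, hc⟩ := mem_span_homog h (hK hyK)
  -- find a nonzero component
  have hex : ∃ i : Fin n, eIdem k n i • y ≠ 0 := by
    by_contra hall
    push_neg at hall
    apply hy0
    rw [← sum_e_smul (k := k) (n := n) y]
    exact Finset.sum_eq_zero fun i _ => hall i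
  obtain ⟨i, hi⟩ := hex
  set j₀ : Fin n := d - i with hj₀
  have hdi : d - j₀ = i := by rw [hj₀, sub_sub_cancel]
  have hcomp : eIdem k n i • y = algebraMap k (CnAlg k n) (c j₀) • (aOp k n ^ (j₀ : ℕ) • v) := by
    rw [← hdi, hc]
    exact component_eq h c j₀
  have hciK : algebraMap k (CnAlg k n) (c j₀) • (aOp k n ^ (j₀ : ℕ) • v) ∈ K := by
    rw [← hcomp]; exact Submodule.smul_mem _ _ hyK
  have hc0 : c j₀ ≠ 0 := by
    intro hzero
    rw [hcomp, hzero, map_zero, zero_smul] at hi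
    exact hi rfl
  have hjK : aOp k n ^ (j₀ : ℕ) • v ∈ K := by
    have := Submodule.smul_mem K (algebraMap k (CnAlg k n) (c j₀)⁻¹) hciK
    rwa [← mul_smul, ← map_mul, inv_mul_cancel₀ hc0, map_one, one_smul] at this
  have hjne : aOp k n ^ (j₀ : ℕ) • v ≠ 0 := by
    intro hzero
    rw [hcomp, hzero, smul_zero] at hi
    exact hi rfl
  have hjle : (j₀ : ℕ) ≤ m := by
    by_contra hgt
    push_neg at hgt
    apply hjne
    have : aOp k n ^ (j₀ : ℕ) • v = aOp k n ^ ((j₀ : ℕ) - (m + 1)) • (aOp k n ^ (m + 1) • v) := by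
      rw [← mul_smul, ← pow_add, Nat.sub_add_cancel hgt]
    rw [this, hm1, smul_zero]
  have : aOp k n ^ m • v = aOp k n ^ (m - (j₀ : ℕ)) • (aOp k n ^ (j₀ : ℕ) • v) := by
    rw [← mul_smul, ← pow_add, Nat.sub_add_cancel hjle]
  rw [this]
  exact Submodule.smul_mem _ _ hjK

lemma e_smul_eq_zero_of_notin {d : Fin n} {v : M} (h : Homog k n d v)
    {K : Submodule (CnAlg k n) M} (hK : K ≤ Submodule.span (CnAlg k n) {v})
    (hvK : v ∉ K) {y : M} (hy : y ∈ K) : eIdem k n d • y = 0 := by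
  obtain ⟨c, hc⟩ := mem_span_homog h (hK hy)
  have hdd : d - (0 : Fin n) = d := by rw [sub_zero]
  have hcomp : eIdem k n d • y = algebraMap k (CnAlg k n) (c 0) • (aOp k n ^ ((0 : Fin n) : ℕ) • v) := by
    rw [hc, ← hdd]
    exact component_eq h c 0
  rw [Fin.val_zero, pow_zero, one_smul] at hcomp
  by_cases hc0 : c 0 = 0
  · rw [hcomp, hc0, map_zero, zero_smul]
  · exfalso
    apply hvK
    have h1 : algebraMap k (CnAlg k n) (c 0) • v ∈ K := by
      rw [← hcomp]; exact Submodule.smul_mem _ _ hy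
    have := Submodule.smul_mem K (algebraMap k (CnAlg k n) (c 0)⁻¹) h1
    rwa [← mul_smul, ← map_mul, inv_mul_cancel₀ hc0, map_one, one_smul] at this

lemma gen_notin_sup {d : Fin n} {v : M} (h : Homog k n d v)
    {K₁ K₂ : Submodule (CnAlg k n) M}
    (hK1 : K₁ ≤ Submodule.span (CnAlg k n) {v}) (hK2 : K₂ ≤ Submodule.span (CnAlg k n) {v})
    (hv1 : v ∉ K₁) (hv2 : v ∉ K₂) : v ∉ K₁ ⊔ K₂ := by
  intro hv
  obtain ⟨y₁, hy₁, y₂, hy₂, hsum⟩ := Submodule.mem_sup.mp hv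
  have h1 := e_smul_eq_zero_of_notin h hK1 hv1 hy₁
  have h2 := e_smul_eq_zero_of_notin h hK2 hv2 hy₂
  have : v = 0 := by
    have hv' : eIdem k n d • v = v := h
    rw [← hv', ← hsum, smul_add, h1, h2, add_zero]
  exact hv1 (this ▸ Submodule.zero_mem K₁)


lemma smul_cancel_algebraMap {c : k} (hc : c ≠ 0) {z : M}
    (hz : algebraMap k (CnAlg k n) c • z = 0) : z = 0 := by
  have h2 := congrArg (fun t => algebraMap k (CnAlg k n) c⁻¹ • t) hz
  simpa [← mul_smul, ← map_mul, inv_mul_cancel₀ hc] using h2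

lemma smul_algebraMap_comm (r : CnAlg k n) (c : k) (z : M) :
    r • (algebraMap k (CnAlg k n) c • z) = algebraMap k (CnAlg k n) c • (r • z) := by
  rw [← mul_smul, ← Algebra.commutes c, mul_smul]

lemma a_smul_mem_span {r : CnAlg k n} {v : M} :
    r • v ∈ Submodule.span (CnAlg k n) {v} :=
  Submodule.mem_span_singleton.mpr ⟨r, rfl⟩

/-- The Zorn splitting lemma: a homogeneous element of maximal "order" generates a
direct summand. -/
lemma exists_isCompl_span {l : ℕ} (hl : ∀ x : M, aOp k n ^ l • x = 0)
    {d : Fin n} {v : M} (h : Homog k n d v) (hlv : aOp k n ^ (l - 1) • v ≠ 0) :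
    ∃ W : Submodule (CnAlg k n) M, IsCompl (Submodule.span (CnAlg k n) {v}) W := by
  classical
  set V := Submodule.span (CnAlg k n) {v} with hV
  have hv0 : v ≠ 0 := fun hz => hlv (by rw [hz, smul_zero])
  have hl1 : 1 ≤ l := by
    rcases Nat.eq_zero_or_pos l with hz | hp
    · exfalso; apply hv0; have := hl v; rwa [hz, pow_zero, one_smul] at this
    · exact hp
  obtain ⟨W, -, hWmax⟩ := zorn_le_nonempty₀
    {W : Submodule (CnAlg k n) M | Disjoint V W}
    (by
      intro c hc hchain W₀ hW₀
      refine ⟨sSup c, ?_, fun z hz => le_sSup hz⟩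
      rw [Set.mem_setOf_eq, Submodule.disjoint_def]
      intro x hxV hxS
      obtain ⟨W', hW'c, hxW'⟩ := (Submodule.mem_sSup_of_directed ⟨W₀, hW₀⟩
        (hchain.directedOn)).mp hxS
      exact Submodule.disjoint_def.mp (hc hW'c) x hxV hxW')
    (⊥ : Submodule (CnAlg k n) M) disjoint_bot_right
  have hdisj : Disjoint V W := hWmax.prop
  refine ⟨W, hdisj, ?_⟩
  rw [codisjoint_iff]
  by_contra hne
  have hex : ∃ x, x ∉ V ⊔ W := by
    by_contra hall
    push_neg at hall
    exact hne (Submodule.eq_top_iff'.mpr hall)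
  obtain ⟨x, hx⟩ := hex
  have hex2 : ∃ i : Fin n, eIdem k n i • x ∉ V ⊔ W := by
    by_contra hall
    push_neg at hall
    apply hx
    rw [← sum_e_smul (k := k) (n := n) x]
    exact Submodule.sum_mem _ fun i _ => hall i
  obtain ⟨i, hu₀⟩ := hex2
  set u₀ := eIdem k n i • x with hu₀def
  have hu₀h : Homog k n i u₀ := by
    show _ • _ = _
    rw [hu₀def, ← mul_smul, e_mul_e]
  have hPex : ∃ j, aOp k n ^ j • u₀ ∈ V ⊔ W := ⟨l, by rw [hl u₀]; exact Submodule.zero_mem _⟩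
  set j := Nat.find hPex with hjdef
  have hj1 : 1 ≤ j := by
    rcases Nat.eq_zero_or_pos j with hz | hp
    · exfalso
      have := Nat.find_spec hPex
      rw [← hjdef, hz, pow_zero, one_smul] at this
      exact hu₀ this
    · exact hp
  set u := aOp k n ^ (j - 1) • u₀ with hudef
  have hu : u ∉ V ⊔ W := Nat.find_min hPex (by omega)
  set s : Fin n := i - ((j - 1 : ℕ) : Fin n) with hsdef
  have huh : Homog k n s u := by rw [hsdef]; exact hu₀h.a_pow_smul_homog (j - 1)
  have hau : aOp k n • u ∈ V ⊔ W := by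
    have heq : aOp k n • u = aOp k n ^ j • u₀ := by
      rw [hudef, ← mul_smul, ← pow_succ', Nat.sub_add_cancel hj1]
    rw [heq]
    exact Nat.find_spec hPex
  have hauh : Homog k n (s - 1) (aOp k n • u) := huh.a_smul_homog
  obtain ⟨z, hzV, w, hwW, hsum⟩ := Submodule.mem_sup.mp hau
  obtain ⟨c, hc⟩ := mem_span_homog h hzV
  set m : Fin n := d - (s - 1) with hmdef
  have hdm : d - m = s - 1 := by rw [hmdef, sub_sub_cancel]
  set w' := eIdem k n (s - 1) • w with hw'def
  have hw'W : w' ∈ W := Submodule.smul_mem _ _ hwW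
  have hkey : aOp k n • u = algebraMap k (CnAlg k n) (c m) • (aOp k n ^ (m : ℕ) • v) + w' := by
    have hauh' : eIdem k n (s - 1) • (aOp k n • u) = aOp k n • u := hauh
    calc aOp k n • u = eIdem k n (s - 1) • (aOp k n • u) := hauh'.symm
      _ = eIdem k n (s - 1) • z + eIdem k n (s - 1) • w := by rw [← hsum, smul_add]
      _ = algebraMap k (CnAlg k n) (c m) • (aOp k n ^ (m : ℕ) • v) + w' := by
          rw [hw'def, hc]
          congr 1
          rw [← hdm]
          exact component_eq h c m
  have hmain : ∃ u', u' ∉ V ⊔ W ∧ aOp k n • u' ∈ W ∧ Homog k n s u' := by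
    by_cases hm0 : m = 0
    · have hc0 : c m = 0 := by
        by_contra hc0
        apply hlv
        have h2a : aOp k n ^ (l - 1) • (aOp k n • u) = 0 := by
          rw [← mul_smul, ← pow_succ, Nat.sub_add_cancel hl1, hl u]
        rw [hkey, smul_add, smul_algebraMap_comm] at h2a
        have hXeq := eq_neg_of_add_eq_zero_left h2a
        have hXW : algebraMap k (CnAlg k n) (c m)
            • (aOp k n ^ (l - 1) • (aOp k n ^ (m : ℕ) • v)) ∈ W := by
          rw [hXeq]
          exact Submodule.neg_mem _ (Submodule.smul_mem _ _ hw'W)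
        have hXV : algebraMap k (CnAlg k n) (c m)
            • (aOp k n ^ (l - 1) • (aOp k n ^ (m : ℕ) • v)) ∈ V := by
          rw [← mul_smul, ← mul_smul]
          exact a_smul_mem_span
        have hX0 := Submodule.disjoint_def.mp hdisj _ hXV hXW
        have hY0 := smul_cancel_algebraMap hc0 hX0
        rw [hm0] at hY0
        simpa using hY0
      refine ⟨u, hu, ?_, huh⟩
      rw [hkey, hc0, map_zero, zero_smul, zero_add]
      exact hw'W
    · have hm1 : 1 ≤ (m : ℕ) :=
        Nat.one_le_iff_ne_zero.mpr (fun hz => hm0 (Fin.ext (by simp [hz])))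
      set u' := u - algebraMap k (CnAlg k n) (c m) • (aOp k n ^ ((m : ℕ) - 1) • v) with hu'def
      have hterm : algebraMap k (CnAlg k n) (c m) • (aOp k n ^ ((m : ℕ) - 1) • v) ∈ V := by
        rw [← mul_smul]
        exact a_smul_mem_span
      refine ⟨u', ?_, ?_, ?_⟩
      · intro hmem
        apply hu
        have : u = u' + algebraMap k (CnAlg k n) (c m) • (aOp k n ^ ((m : ℕ) - 1) • v) := by
          rw [hu'def, sub_add_cancel]
        rw [this]
        exact Submodule.add_mem _ hmem (Submodule.mem_sup_left hterm)
      · have : aOp k n • u' = w' := by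
          rw [hu'def, smul_sub, hkey, smul_algebraMap_comm, ← mul_smul (aOp k n),
            ← pow_succ', Nat.sub_add_cancel hm1, add_sub_cancel_left]
        rw [this]
        exact hw'W
      · show eIdem k n s • u' = u'
        have hterm_h : Homog k n s (aOp k n ^ ((m : ℕ) - 1) • v) := by
          have h1 := h.a_pow_smul_homog ((m : ℕ) - 1)
          have h2 : d - (((m : ℕ) - 1 : ℕ) : Fin n) = s := by
            rw [Nat.cast_sub hm1, Fin.cast_val_eq_self, Nat.cast_one]
            have h3 : d - (m - 1) = (d - m) + 1 := by ring
            rw [h3, hdm, sub_add_cancel]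
          rw [← h2]
          exact h1
        have huh' : eIdem k n s • u = u := huh
        have hterm_h' : eIdem k n s • (aOp k n ^ ((m : ℕ) - 1) • v)
            = aOp k n ^ ((m : ℕ) - 1) • v := hterm_h
        rw [hu'def, smul_sub, huh', e_smul_algebraMap, hterm_h']
  obtain ⟨u', hu'nm, hau'W, hu'h⟩ := hmain
  set W' := W ⊔ Submodule.span (CnAlg k n) {u'} with hW'def
  have hu'W' : u' ∈ W' := Submodule.mem_sup_right (Submodule.mem_span_singleton_self u')
  have hdisj' : Disjoint V W' := by
    rw [Submodule.disjoint_def]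
    intro y hyV hyW'
    obtain ⟨w₂, hw₂, z', hz', hsum'⟩ := Submodule.mem_sup.mp hyW'
    obtain ⟨r, hr⟩ := Submodule.mem_span_singleton.mp hz'
    obtain ⟨c', hc'⟩ := repr_smul hu'h r
    have hRW : ∑ jj ∈ Finset.univ.erase (0 : Fin n),
        algebraMap k (CnAlg k n) (c' jj) • (aOp k n ^ (jj : ℕ) • u') ∈ W := by
      apply Submodule.sum_mem
      intro jj hjj
      have hjj0 : (jj : ℕ) ≠ 0 := by
        intro hz
        exact (Finset.mem_erase.mp hjj).1 (Fin.ext (by simp [hz]))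
      have : aOp k n ^ (jj : ℕ) • u' = aOp k n ^ ((jj : ℕ) - 1) • (aOp k n • u') := by
        rw [← mul_smul, ← pow_succ, Nat.sub_add_cancel (Nat.one_le_iff_ne_zero.mpr hjj0)]
      rw [this]
      exact Submodule.smul_mem _ _ (Submodule.smul_mem _ _ hau'W)
    have hsplit : r • u' = algebraMap k (CnAlg k n) (c' 0) • u'
        + ∑ jj ∈ Finset.univ.erase (0 : Fin n),
          algebraMap k (CnAlg k n) (c' jj) • (aOp k n ^ (jj : ℕ) • u') := by
      rw [hc']
      rw [← Finset.add_sum_erase Finset.univ _ (Finset.mem_univ (0 : Fin n))]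
      congr 1
      simp
    by_cases hc'0 : c' 0 = 0
    · have hyW : y ∈ W := by
        rw [← hsum', ← hr, hsplit, hc'0, map_zero, zero_smul, zero_add]
        exact Submodule.add_mem _ hw₂ hRW
      exact Submodule.disjoint_def.mp hdisj y hyV hyW
    · exfalso
      apply hu'nm
      have hu'eq : u' = algebraMap k (CnAlg k n) (c' 0)⁻¹
          • (y - w₂ - (∑ jj ∈ Finset.univ.erase (0 : Fin n),
            algebraMap k (CnAlg k n) (c' jj) • (aOp k n ^ (jj : ℕ) • u'))) := by
        have : y - w₂ - (∑ jj ∈ Finset.univ.erase (0 : Fin n),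
            algebraMap k (CnAlg k n) (c' jj) • (aOp k n ^ (jj : ℕ) • u'))
            = algebraMap k (CnAlg k n) (c' 0) • u' := by
          rw [← hsum', ← hr, hsplit]
          abel
        rw [this, ← mul_smul, ← map_mul, inv_mul_cancel₀ hc'0, map_one, one_smul]
      rw [hu'eq]
      apply Submodule.smul_mem
      apply Submodule.sub_mem
      apply Submodule.sub_mem
      · exact Submodule.mem_sup_left hyV
      · exact Submodule.mem_sup_right hw₂
      · exact Submodule.mem_sup_right hRW
  have hle : W' ≤ W := hWmax.2 hdisj' le_sup_left
  exact hu'nm (Submodule.mem_sup_right (hle hu'W'))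

end Structure

section Decomp
variable [NeZero n] {M : Type} [AddCommGroup M] [Module (CnAlg k n) M]

lemma exists_block (hNT : Nontrivial M) :
    ∃ (d : Fin n) (v : M) (m : ℕ) (W : Submodule (CnAlg k n) M),
      Homog k n d v ∧ aOp k n ^ m • v ≠ 0 ∧ aOp k n ^ (m + 1) • v = 0 ∧
      IsCompl (Submodule.span (CnAlg k n) {v}) W := by
  classical
  have hPex : ∃ l, ∀ x : M, aOp k n ^ l • x = 0 := ⟨n, a_pow_n_smul⟩
  set l := Nat.find hPex with hldef
  have hl : ∀ x : M, aOp k n ^ l • x = 0 := Nat.find_spec hPex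
  have hl1 : 1 ≤ l := by
    rcases Nat.eq_zero_or_pos l with hz | hp
    · exfalso
      obtain ⟨x, y, hxy⟩ := hNT
      apply hxy
      have hx := hl x
      have hy := hl y
      rw [hz, pow_zero, one_smul] at hx hy
      rw [hx, hy]
    · exact hp
  have hmin : ∃ x₀ : M, aOp k n ^ (l - 1) • x₀ ≠ 0 := by
    by_contra hall
    push_neg at hall
    exact Nat.find_min hPex (m := l - 1) (by omega) hall
  obtain ⟨x₀, hx₀⟩ := hmin
  have hex : ∃ i : Fin n, aOp k n ^ (l - 1) • (eIdem k n i • x₀) ≠ 0 := by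
    by_contra hall
    push_neg at hall
    apply hx₀
    conv_lhs => rw [← sum_e_smul (k := k) (n := n) x₀]
    rw [Finset.smul_sum]
    exact Finset.sum_eq_zero fun i _ => hall i
  obtain ⟨i, hi⟩ := hex
  have hih : Homog k n i (eIdem k n i • x₀) := by
    show _ • _ = _
    rw [← mul_smul, e_mul_e]
  obtain ⟨W, hW⟩ := exists_isCompl_span hl hih hi
  refine ⟨i, eIdem k n i • x₀, l - 1, W, hih, hi, ?_, hW⟩
  rw [Nat.sub_add_cancel hl1]
  exact hl _

lemma indec_struct (hNT : Nontrivial M)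
    (hInd : ∀ K K' : Submodule (CnAlg k n) M, IsCompl K K' → K = ⊥ ∨ K' = ⊥) :
    ∃ (d : Fin n) (v : M) (m : ℕ),
      Homog k n d v ∧ aOp k n ^ m • v ≠ 0 ∧ aOp k n ^ (m + 1) • v = 0 ∧
      Submodule.span (CnAlg k n) {v} = ⊤ := by
  obtain ⟨d, v, m, W, h1, h2, h3, h4⟩ := exists_block (k := k) (n := n) (M := M) hNT
  have hv0 : v ≠ 0 := fun hz => h2 (by rw [hz, smul_zero])
  rcases hInd _ _ h4 with hb | hb
  · exfalso
    apply hv0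
    have hm := Submodule.mem_span_singleton_self (R := CnAlg k n) v
    rw [hb] at hm
    simpa using hm
  · refine ⟨d, v, m, h1, h2, h3, ?_⟩
    have hsup := h4.sup_eq_top
    rwa [hb, sup_bot_eq] at hsup

lemma coe_homog {P : Submodule (CnAlg k n) M} {d : Fin n} {v : ↥P}
    (h : Homog k n d v) : Homog k n d (v : M) := by
  have := congrArg (Subtype.val) (h : eIdem k n d • v = v)
  rwa [Submodule.coe_smul] at this

lemma exists_decomp [Module k M] [IsScalarTower k (CnAlg k n) M] [FiniteDimensional k M]
    (P : Submodule (CnAlg k n) M) :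
    ∃ (r : ℕ) (v : Fin r → M) (d : Fin r → Fin n) (mm : Fin r → ℕ),
      (∀ t, Homog k n (d t) (v t)) ∧
      (∀ t, aOp k n ^ (mm t) • v t ≠ 0 ∧ aOp k n ^ (mm t + 1) • v t = 0) ∧
      (∀ t : Fin r, Disjoint (Submodule.span (CnAlg k n) {v t})
        (⨆ s : {s : Fin r // s ≠ t}, Submodule.span (CnAlg k n) {v (s : Fin r)})) ∧
      (⨆ t, Submodule.span (CnAlg k n) {v t}) = P := by
  generalize hgen : Module.finrank k ↥(P.restrictScalars k) = q
  induction q using Nat.strong_induction_on generalizing P with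
  | _ q IH =>
  by_cases hP : P = ⊥
  · refine ⟨0, Fin.elim0, Fin.elim0, Fin.elim0, ?_, ?_, ?_, ?_⟩
    · exact fun t => t.elim0
    · exact fun t => t.elim0
    · exact fun t => t.elim0
    · rw [hP]
      exact iSup_of_empty _
  · have hNT : Nontrivial ↥P := Submodule.nontrivial_iff_ne_bot.mpr hP
    obtain ⟨d0, v0, m0, W', h1, h2, h3, h4⟩ := exists_block (k := k) (n := n) (M := ↥P) hNT
    set V : Submodule (CnAlg k n) M := Submodule.span (CnAlg k n) {(v0 : M)} with hVdef
    set W : Submodule (CnAlg k n) M := Submodule.map P.subtype W' with hWdef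
    have hVmap : V = Submodule.map P.subtype (Submodule.span (CnAlg k n) {v0}) := by
      rw [hVdef, Submodule.map_span, Set.image_singleton]
      rfl
    have hWP : W ≤ P := by
      rw [hWdef]
      exact Submodule.map_subtype_le P W'
    have hsup : V ⊔ W = P := by
      rw [hVmap, hWdef, ← Submodule.map_sup, h4.sup_eq_top, Submodule.map_subtype_top]
    have hdisj : Disjoint V W := by
      rw [disjoint_iff, hVmap, hWdef, ← Submodule.map_inf _ (Submodule.injective_subtype P),
        h4.inf_eq_bot, Submodule.map_bot]
    have hv00 : v0 ≠ 0 := fun hz => h2 (by rw [hz, smul_zero])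
    have hWltP : W < P := by
      rcases lt_or_eq_of_le hWP with hlt | heq
      · exact hlt
      · exfalso
        apply hv00
        have hvV : (v0 : M) ∈ V := Submodule.mem_span_singleton_self _
        have hvW : (v0 : M) ∈ W := by rw [heq]; exact v0.2
        have := Submodule.disjoint_def.mp hdisj _ hvV hvW
        exact Subtype.ext this
    have hrank : Module.finrank k ↥(W.restrictScalars k) < q := by
      rw [← hgen]
      apply Submodule.finrank_lt_finrank_of_lt
      apply lt_of_le_of_ne
      · exact fun x hx => hWP hx
      · intro hEq
        exact (ne_of_lt hWltP) (Submodule.restrictScalars_injective k _ _ hEq)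
    obtain ⟨r, vo, do_, mo, ho1, ho2, ho3, ho4⟩ := IH _ hrank W rfl
    refine ⟨r + 1, Fin.cons (v0 : M) vo, Fin.cons d0 do_, Fin.cons m0 mo, ?_, ?_, ?_, ?_⟩
    · intro t
      refine Fin.cases ?_ ?_ t
      · simpa only [Fin.cons_zero] using coe_homog h1
      · intro i
        simpa only [Fin.cons_succ] using ho1 i
    · intro t
      refine Fin.cases ?_ ?_ t
      · simp only [Fin.cons_zero]
        constructor
        · intro hz
          apply h2
          have hco : ((aOp k n ^ m0 • v0 : ↥P) : M) = aOp k n ^ m0 • (v0 : M) := by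
            rw [Submodule.coe_smul]
          apply Subtype.ext
          rw [hco]
          simpa using hz
        · have hco : ((aOp k n ^ (m0 + 1) • v0 : ↥P) : M) = aOp k n ^ (m0 + 1) • (v0 : M) := by
            rw [Submodule.coe_smul]
          rw [← hco, h3]
          simp
      · intro i
        simpa only [Fin.cons_succ] using ho2 i
    · intro t
      refine Fin.cases ?_ ?_ t
      · -- disjointness for the new piece
        simp only [Fin.cons_zero]
        have hbound : (⨆ s : {s : Fin (r + 1) // s ≠ 0},
            Submodule.span (CnAlg k n) {(Fin.cons (v0 : M) vo : Fin (r+1) → M) (s : Fin (r + 1))}) ≤ W := by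
          apply iSup_le
          rintro ⟨s, hs⟩
          rcases Fin.eq_zero_or_eq_succ s with rfl | ⟨i, rfl⟩
          · exact absurd rfl hs
          · simp only [Fin.cons_succ]
            rw [← ho4]
            exact le_iSup (fun t => Submodule.span (CnAlg k n) {vo t}) i
        exact hdisj.mono_right hbound
      · intro i₀
        simp only [Fin.cons_succ]
        rw [Submodule.disjoint_def]
        intro y hy1 hy2
        have hyW : y ∈ W := by
          rw [← ho4]
          exact le_iSup (fun t => Submodule.span (CnAlg k n) {vo t}) i₀ hy1
        have hbound : (⨆ s : {s : Fin (r + 1) // s ≠ i₀.succ},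
            Submodule.span (CnAlg k n) {(Fin.cons (v0 : M) vo : Fin (r+1) → M) (s : Fin (r + 1))}) ≤
            V ⊔ (⨆ s : {s : Fin r // s ≠ i₀}, Submodule.span (CnAlg k n) {vo (s : Fin r)}) := by
          apply iSup_le
          rintro ⟨s, hs⟩
          rcases Fin.eq_zero_or_eq_succ s with rfl | ⟨i, rfl⟩
          · simp only [Fin.cons_zero]
            exact le_sup_left
          · simp only [Fin.cons_succ]
            have hii : i ≠ i₀ := fun hc => hs (by rw [hc])
            refine le_trans ?_ le_sup_right
            exact le_iSup (fun s : {s : Fin r // s ≠ i₀} =>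
              Submodule.span (CnAlg k n) {vo (s : Fin r)}) ⟨i, hii⟩
        have hy2' := hbound hy2
        obtain ⟨z, hzV, w₃, hw₃, hsum⟩ := Submodule.mem_sup.mp hy2'
        have hw₃W : w₃ ∈ W := by
          have : (⨆ s : {s : Fin r // s ≠ i₀},
              Submodule.span (CnAlg k n) {vo (s : Fin r)}) ≤ W := by
            apply iSup_le
            rintro ⟨s, hs⟩
            rw [← ho4]
            exact le_iSup (fun t => Submodule.span (CnAlg k n) {vo t}) s
          exact this hw₃
        have hzW : z ∈ W := by
          have : z = y - w₃ := by rw [← hsum]; abel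
          rw [this]
          exact Submodule.sub_mem _ hyW hw₃W
        have hz0 : z = 0 := Submodule.disjoint_def.mp hdisj _ hzV hzW
        have hyOther : y ∈ (⨆ s : {s : Fin r // s ≠ i₀},
            Submodule.span (CnAlg k n) {vo (s : Fin r)}) := by
          rw [← hsum, hz0, zero_add]
          exact hw₃
        exact Submodule.disjoint_def.mp (ho3 i₀) y hy1 hyOther
    · refine le_antisymm (iSup_le ?_) ?_
      · intro t
        refine Fin.cases ?_ ?_ t
        · refine le_trans ?_ (le_of_eq hsup)
          simp only [Fin.cons_zero]
          exact le_sup_left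
        · intro i
          refine le_trans ?_ (le_of_eq hsup)
          simp only [Fin.cons_succ]
          refine le_trans ?_ le_sup_right
          rw [← ho4]
          exact le_iSup (fun t => Submodule.span (CnAlg k n) {vo t}) i
      · refine le_trans (le_of_eq hsup.symm) (sup_le ?_ ?_)
        · have h0 := le_iSup (fun t => Submodule.span (CnAlg k n)
            {(Fin.cons (v0 : M) vo : Fin (r+1) → M) t}) 0
          simp only [Fin.cons_zero] at h0
          exact h0
        · rw [← ho4]
          apply iSup_le
          intro i
          have h1 := le_iSup (fun t => Submodule.span (CnAlg k n)
            {(Fin.cons (v0 : M) vo : Fin (r+1) → M) t}) i.succ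
          simp only [Fin.cons_succ] at h1
          exact h1


lemma isCompl_family {r : ℕ} (V : Fin r → Submodule (CnAlg k n) M)
    (hdisjs : ∀ t : Fin r, Disjoint (V t) (⨆ s : {s : Fin r // s ≠ t}, V (s : Fin r)))
    (hsup : (⨆ t, V t) = ⊤) (t : Fin r) :
    IsCompl (V t) (⨆ s : {s : Fin r // s ≠ t}, V (s : Fin r)) := by
  constructor
  · exact hdisjs t
  · rw [codisjoint_iff, eq_top_iff, ← hsup]
    apply iSup_le
    intro s
    by_cases hst : s = t
    · subst hst
      exact le_sup_left
    · refine le_trans ?_ le_sup_right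
      exact le_iSup (fun s : {s : Fin r // s ≠ t} => V (s : Fin r)) ⟨s, hst⟩

lemma sum_proj {r : ℕ} (V : Fin r → Submodule (CnAlg k n) M)
    (hcompl : ∀ t : Fin r, IsCompl (V t) (⨆ s : {s : Fin r // s ≠ t}, V (s : Fin r)))
    (hsup : (⨆ t, V t) = ⊤) (x : M) :
    ∑ t, ((V t).subtype) (((V t).linearProjOfIsCompl _ (hcompl t)) x) = x := by
  have hx : x ∈ ⨆ t, V t := by rw [hsup]; trivial
  induction hx using Submodule.iSup_induction' with
  | mem s x hxs =>
      rw [Finset.sum_eq_single_of_mem s (Finset.mem_univ s)]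
      · have h1 := Submodule.linearProjOfIsCompl_apply_left (hcompl s) ⟨x, hxs⟩
        erw [h1]
        rfl
      · intro t _ hts
        have hmem : x ∈ ⨆ s' : {s' : Fin r // s' ≠ t}, V (s' : Fin r) :=
          le_iSup (fun s' : {s' : Fin r // s' ≠ t} => V (s' : Fin r)) ⟨s, Ne.symm hts⟩ hxs
        have h2 := Submodule.linearProjOfIsCompl_apply_right (hcompl t) ⟨x, hmem⟩
        erw [h2, map_zero]
  | zero => simp
  | add x y _ _ hx hy =>
      simp only [map_add]
      rw [Finset.sum_add_distrib, hx, hy]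

end Decomp

section Split
variable [NeZero n] {M' E N : Type} [AddCommGroup M'] [Module (CnAlg k n) M']
  [AddCommGroup E] [Module (CnAlg k n) E] [AddCommGroup N] [Module (CnAlg k n) N]

lemma split_of_restrict_bij (g : E →ₗ[CnAlg k n] N) {U : Submodule (CnAlg k n) E}
    (hinj : Injective (g.comp U.subtype)) (hsurj : Surjective (g.comp U.subtype)) :
    ∃ s : N →ₗ[CnAlg k n] E, g.comp s = LinearMap.id := by
  set e := LinearEquiv.ofBijective (g.comp U.subtype) ⟨hinj, hsurj⟩ with hedef
  refine ⟨U.subtype ∘ₗ (e.symm : N →ₗ[CnAlg k n] ↥U), ?_⟩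
  apply LinearMap.ext
  intro y
  show g (U.subtype (e.symm y)) = y
  have h1 : (g.comp U.subtype) (e.symm y) = e (e.symm y) := by
    rfl
  rw [show g (U.subtype (e.symm y)) = (g.comp U.subtype) (e.symm y) from rfl, h1,
    LinearEquiv.apply_symm_apply]

lemma split_of_proj_bij (f : M' →ₗ[CnAlg k n] E) (g : E →ₗ[CnAlg k n] N)
    (hg : Surjective g) (hex : LinearMap.range f = LinearMap.ker g)
    {U W : Submodule (CnAlg k n) E} (h : IsCompl U W)
    (hinj : Injective ((U.projectionOnto W h).comp f))
    (hsurj : LinearMap.range (U.subtype ∘ₗ ((U.projectionOnto W h).comp f)) = U) :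
    ∃ s : N →ₗ[CnAlg k n] E, g.comp s = LinearMap.id := by
  set π := U.projectionOnto W h with hπdef
  have hker0 : ∀ z : E, z ∈ W → g z = 0 → z = 0 := by
    intro z hzW hgz
    have hzr : z ∈ LinearMap.range f := by
      rw [hex]
      exact hgz
    obtain ⟨m, hm⟩ := hzr
    have hπz : π z = 0 := Submodule.linearProjOfIsCompl_apply_right h ⟨z, hzW⟩
    have hm0 : m = 0 := by
      apply hinj
      rw [map_zero]
      show π (f m) = 0
      rw [hm, hπz]
    rw [← hm, hm0, map_zero]
  have ginj : Injective (g.comp W.subtype) := by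
    rw [← LinearMap.ker_eq_bot]
    rw [Submodule.eq_bot_iff]
    intro z hz
    rw [LinearMap.mem_ker] at hz
    apply Subtype.ext
    exact hker0 (z : E) z.2 hz
  have gsurj : Surjective (g.comp W.subtype) := by
    intro y
    obtain ⟨x₀, hx₀⟩ := hg y
    set xV := U.subtype (π x₀) with hxVdef
    set xW := x₀ - xV with hxWdef
    have hxWW : xW ∈ W := by
      have hπ : π xW = 0 := by
        rw [hxWdef, map_sub, hxVdef]
        have := Submodule.linearProjOfIsCompl_apply_left h (π x₀)
        rw [show π (U.subtype (π x₀)) = π ((π x₀ : E)) from rfl, this, sub_self]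
      have := Submodule.linearProjOfIsCompl_ker (p := U) (q := W) h
      rw [← this]
      exact hπ
    have hxVU : xV ∈ LinearMap.range (U.subtype ∘ₗ (π.comp f)) := by
      rw [hsurj]
      exact (π x₀).2
    obtain ⟨m, hm⟩ := hxVU
    set z2 := f m - xV with hz2def
    have hz2W : z2 ∈ W := by
      have hπ : π z2 = 0 := by
        rw [hz2def, map_sub]
        have h1 : π xV = π (f m) := by
          rw [← hm]
          show π (U.subtype (π (f m))) = π (f m)
          exact Submodule.linearProjOfIsCompl_apply_left h (π (f m))
        rw [h1, sub_self]
      have := Submodule.linearProjOfIsCompl_ker (p := U) (q := W) h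
      rw [← this]
      exact hπ
    have hgfm : g (f m) = 0 := by
      have : f m ∈ LinearMap.ker g := by
        rw [← hex]
        exact ⟨m, rfl⟩
      exact this
    refine ⟨⟨xW - z2, Submodule.sub_mem _ hxWW hz2W⟩, ?_⟩
    show g (xW - z2) = y
    have hy : g (xW - z2) = g x₀ - g xV - (g (f m) - g xV) := by
      rw [hxWdef, hz2def]
      simp [map_sub]
    rw [hy, hgfm, ← hx₀]
    abel
  exact split_of_restrict_bij g ginj gsurj

end Split
end CnProof

open CnProof

/-- Over `C_n`, let `0 → M' → E → N → 0` be a non-split short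
exact sequence with `M'` and `N` indecomposable. Then there is an indecomposable
direct summand `U` of `E` such that `M'` embeds into `U` (via the `U`-component of
the inclusion) and `U` surjects onto `N` (via the restriction of the projection). -/
theorem cn_nonsplit_ses_summand
    (k : Type) [Field k] (n : ℕ)
    (M' E N : Type) [AddCommGroup M'] [Module (CnAlg k n) M'] [AddCommGroup E]
    [Module (CnAlg k n) E] [AddCommGroup N] [Module (CnAlg k n) N]
    [Module.Finite (CnAlg k n) M'] [Module.Finite (CnAlg k n) E] [Module.Finite (CnAlg k n) N]
    (hM' : IsIndecModule (CnAlg k n) M') (hN : IsIndecModule (CnAlg k n) N)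
    (f : M' →ₗ[CnAlg k n] E) (g : E →ₗ[CnAlg k n] N)
    (hf : Injective f) (hg : Surjective g) (hex : LinearMap.range f = LinearMap.ker g)
    (hnonsplit : ¬ ∃ s : N →ₗ[CnAlg k n] E, g.comp s = LinearMap.id) :
    ∃ (U W : Submodule (CnAlg k n) E) (h : IsCompl U W),
      IsIndecModule (CnAlg k n) ↥U ∧
      Injective ((U.linearProjOfIsCompl W h).comp f) ∧
      Surjective (g.comp U.subtype) := by
  classical
  rcases Nat.eq_zero_or_pos n with hn0 | hnpos
  · exfalso
    subst hn0
    have h01 : (0 : CnAlg k 0) = 1 := by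
      have := RingQuot.mkAlgHom_rel k (@CnRel.unit k _ 0)
      simpa using this
    have hzero : ∀ z : M', z = 0 := by
      intro z
      calc z = (1 : CnAlg k 0) • z := (one_smul _ z).symm
        _ = (0 : CnAlg k 0) • z := by rw [h01]
        _ = 0 := zero_smul _ z
    obtain ⟨x, y, hxy⟩ := hM'.1
    exact hxy ((hzero x).trans (hzero y).symm)
  haveI : NeZero n := ⟨hnpos.ne'⟩
  letI instkM : Module k M' := Module.compHom M' (algebraMap k (CnAlg k n))
  letI instkE : Module k E := Module.compHom E (algebraMap k (CnAlg k n))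
  letI instkN : Module k N := Module.compHom N (algebraMap k (CnAlg k n))
  haveI towM : IsScalarTower k (CnAlg k n) M' := ⟨fun c r x => by
    show (c • r) • x = algebraMap k (CnAlg k n) c • (r • x)
    rw [Algebra.smul_def, mul_smul]⟩
  haveI towE : IsScalarTower k (CnAlg k n) E := ⟨fun c r x => by
    show (c • r) • x = algebraMap k (CnAlg k n) c • (r • x)
    rw [Algebra.smul_def, mul_smul]⟩
  haveI towN : IsScalarTower k (CnAlg k n) N := ⟨fun c r x => by
    show (c • r) • x = algebraMap k (CnAlg k n) c • (r • x)
    rw [Algebra.smul_def, mul_smul]⟩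
  haveI finkA : Module.Finite k (CnAlg k n) := by
    rw [Module.finite_def]
    refine ⟨(Finset.univ : Finset (Fin n × Fin n)).image
      (fun p => aOp k n ^ (p.1 : ℕ) * eIdem k n p.2), ?_⟩
    rw [Finset.coe_image, Finset.coe_univ, Set.image_univ]
    exact spanT_eq_top
  haveI : Module.Finite k M' := Module.Finite.trans (CnAlg k n) M'
  haveI : Module.Finite k E := Module.Finite.trans (CnAlg k n) E
  haveI : Module.Finite k N := Module.Finite.trans (CnAlg k n) N
  -- structure of M' and N
  obtain ⟨dM, vM, mM, hMhom, hMne, hMzero, hMtop⟩ :=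
    indec_struct (k := k) (n := n) (M := M') hM'.1 hM'.2
  obtain ⟨dN, w, mN, hNhom, hNne, hNzero, hNtop⟩ :=
    indec_struct (k := k) (n := n) (M := N) hN.1 hN.2
  have hw0 : w ≠ 0 := fun hz => hNne (by rw [hz, smul_zero])
  have hsM0 : aOp k n ^ mM • vM ≠ 0 := hMne
  -- decompose E
  obtain ⟨r, v, dd, mm, hhom, hords, hdisjs, hsupE⟩ :=
    exists_decomp (k := k) (n := n) (M := E) ⊤
  set V : Fin r → Submodule (CnAlg k n) E :=
    fun t => Submodule.span (CnAlg k n) {v t} with hVdef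
  have hcompl : ∀ t, IsCompl (V t) (⨆ s : {s : Fin r // s ≠ t}, V (s : Fin r)) :=
    isCompl_family V hdisjs hsupE
  set Wof : Fin r → Submodule (CnAlg k n) E :=
    fun t => ⨆ s : {s : Fin r // s ≠ t}, V (s : Fin r) with hWofdef
  set π : (t : Fin r) → (E →ₗ[CnAlg k n] ↥(V t)) :=
    fun t => (V t).linearProjOfIsCompl (Wof t) (hcompl t) with hπdef
  -- existence of i with injective component
  have hi : ∃ i, Injective ((π i).comp f) := by
    by_contra hall
    push_neg at hall
    have hskip : ∀ t, ((π t).comp f) (aOp k n ^ mM • vM) = 0 := by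
      intro t
      have hker : LinearMap.ker ((π t).comp f) ≠ ⊥ := by
        intro hk
        exact hall t (LinearMap.ker_eq_bot.mp hk)
      have hmem := socle_mem hMhom hMzero (K := LinearMap.ker ((π t).comp f))
        (by rw [hMtop]; exact le_top) hker
      exact LinearMap.mem_ker.mp hmem
    have hfs : f (aOp k n ^ mM • vM) = 0 := by
      have hsum := sum_proj V hcompl hsupE (f (aOp k n ^ mM • vM))
      rw [← hsum]
      apply Finset.sum_eq_zero
      intro t _
      have : (π t) (f (aOp k n ^ mM • vM)) = 0 := hskip t
      rw [this, map_zero]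
    apply hsM0
    apply hf
    rw [hfs, map_zero]
  -- existence of j with surjective restriction
  have hj : ∃ j, Submodule.span (CnAlg k n) {w} ≤ Submodule.map g (V j) := by
    have hwK : ∃ j, w ∈ Submodule.map g (V j) := by
      by_contra hall
      push_neg at hall
      have hwsup : w ∈ Finset.univ.sup (fun j => Submodule.map g (V j)) := by
        obtain ⟨x, hx⟩ := hg w
        have hsum := sum_proj V hcompl hsupE x
        rw [← hx, ← hsum, map_sum]
        apply Submodule.sum_mem
        intro t _
        exact Finset.le_sup (f := fun j => Submodule.map g (V j)) (Finset.mem_univ t)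
          ⟨(V t).subtype ((π t) x), ((π t) x).2, rfl⟩
      have hnot : ∀ S : Finset (Fin r), w ∉ S.sup (fun j => Submodule.map g (V j)) := by
        intro S
        induction S using Finset.induction_on with
        | empty => simpa using hw0
        | insert a s hnotmem ih =>
            rw [Finset.sup_insert]
            exact gen_notin_sup hNhom (by rw [hNtop]; exact le_top)
              (by rw [hNtop]; exact le_top) (hall _) ih
      exact hnot Finset.univ hwsup
    obtain ⟨j, hjmem⟩ := hwK
    exact ⟨j, Submodule.span_le.mpr (by simpa using hjmem)⟩
  have hsurjj : ∀ j, Submodule.span (CnAlg k n) {w} ≤ Submodule.map g (V j) →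
      Surjective (g.comp (V j).subtype) := by
    intro j hle
    rw [← LinearMap.range_eq_top, LinearMap.range_comp, Submodule.range_subtype,
      eq_top_iff, ← hNtop]
    exact hle
  obtain ⟨i, hiinj⟩ := hi
  obtain ⟨j, hjle⟩ := hj
  by_cases hij : i = j
  · -- the summand is found
    subst hij
    refine ⟨V i, Wof i, hcompl i, ⟨?_, ?_⟩, hiinj, hsurjj i hjle⟩
    · -- Nontrivial
      rw [Submodule.nontrivial_iff_ne_bot]
      intro hb
      have hm := Submodule.mem_span_singleton_self (R := CnAlg k n) (v i)
      have hm2 : v i ∈ V i := hm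
      rw [hb] at hm2
      have hvi0 : v i = 0 := by simpa using hm2
      exact (hords i).1 (by rw [hvi0, smul_zero])
    · intro K K' hKK'
      by_contra hboth
      push_neg at hboth
      obtain ⟨hK, hK'⟩ := hboth
      have hmap : ∀ (K₀ : Submodule (CnAlg k n) ↥(V i)), K₀ ≠ ⊥ →
          aOp k n ^ (mm i) • v i ∈ Submodule.map (V i).subtype K₀ := by
        intro K₀ hK₀
        apply socle_mem (hhom i) (hords i).2
        · exact Submodule.map_subtype_le _ _
        · obtain ⟨y, hy, hy0⟩ := (Submodule.ne_bot_iff K₀).mp hK₀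
          rw [Submodule.ne_bot_iff]
          refine ⟨(y : E), ⟨y, hy, rfl⟩, ?_⟩
          intro hb
          exact hy0 (Subtype.ext hb)
      have h1 := hmap K hK
      have h2 := hmap K' hK'
      obtain ⟨y1, hy1, hy1e⟩ := h1
      obtain ⟨y2, hy2, hy2e⟩ := h2
      have hy12 : y1 = y2 := Subtype.ext (hy1e.trans hy2e.symm)
      have hbot : y1 ∈ K ⊓ K' := ⟨hy1, hy12 ▸ hy2⟩
      rw [hKK'.inf_eq_bot] at hbot
      apply (hords i).1
      rw [← hy1e, hbot]
      rfl
  · exfalso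
    -- dimension count
    have hdim : Module.finrank k E = Module.finrank k M' + Module.finrank k N := by
      have h1 := LinearMap.finrank_range_add_finrank_ker (g.restrictScalars k)
      have hrange : LinearMap.range (g.restrictScalars k) = ⊤ := by
        rw [LinearMap.range_eq_top]
        exact hg
      have hker : LinearMap.ker (g.restrictScalars k) = LinearMap.range (f.restrictScalars k) := by
        apply le_antisymm
        · intro x hx
          have hx2 : x ∈ LinearMap.ker g := hx
          rw [← hex] at hx2
          obtain ⟨m, hm⟩ := hx2
          exact ⟨m, hm⟩
        · rintro x ⟨m, rfl⟩
          show f m ∈ LinearMap.ker g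
          rw [← hex]
          exact ⟨m, rfl⟩
      rw [hrange, hker, finrank_top,
        LinearMap.finrank_range_of_inj (show Injective (f.restrictScalars k) from hf)] at h1
      omega
    have hVi : Module.finrank k M' + 1 ≤ Module.finrank k ↥((V i).restrictScalars k) := by
      set F := (V i).subtype ∘ₗ ((π i).comp f) with hFdef
      have hFle : LinearMap.range F ≤ V i := by
        rintro x ⟨m, rfl⟩
        exact (((π i).comp f) m).2
      have hFne : LinearMap.range F ≠ V i := by
        intro heq
        exact hnonsplit (split_of_proj_bij f g hg hex (hcompl i) hiinj heq)
      have hrangelt : LinearMap.range F < V i := lt_of_le_of_ne hFle hFne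
      obtain ⟨hle2, y, hyV, hyR⟩ := SetLike.lt_iff_le_and_exists.mp hrangelt
      have hFkinj : Injective (F.restrictScalars k) := by
        intro a b hab
        apply hiinj
        exact Subtype.ext hab
      have hRlt : LinearMap.range (F.restrictScalars k) < (V i).restrictScalars k := by
        apply lt_of_le_of_ne
        · rintro x ⟨m, rfl⟩
          exact (((π i).comp f) m).2
        · intro heq
          apply hyR
          have hy2 : y ∈ LinearMap.range (F.restrictScalars k) := by rw [heq]; exact hyV
          obtain ⟨m, hm⟩ := hy2
          exact ⟨m, hm⟩
      have hlt2 := Submodule.finrank_lt_finrank_of_lt hRlt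
      rw [LinearMap.finrank_range_of_inj hFkinj] at hlt2
      omega
    have hVj : Module.finrank k N + 1 ≤ Module.finrank k ↥((V j).restrictScalars k) := by
      have hGsurj := hsurjj j hjle
      have hGninj : ¬ Injective (g.comp (V j).subtype) := by
        intro hinj
        exact hnonsplit (split_of_restrict_bij g hinj hGsurj)
      have hkerex : ∃ z : ↥(V j), z ≠ 0 ∧ g (z : E) = 0 := by
        by_contra hall
        push_neg at hall
        apply hGninj
        rw [← LinearMap.ker_eq_bot, Submodule.eq_bot_iff]
        intro z hz
        by_contra hz0
        exact (hall z hz0) (LinearMap.mem_ker.mp hz)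
      obtain ⟨z, hz0, hgz⟩ := hkerex
      set h' := (g.restrictScalars k).domRestrict ((V j).restrictScalars k) with hh'def
      have h1 := LinearMap.finrank_range_add_finrank_ker h'
      have hrange : LinearMap.range h' = ⊤ := by
        rw [eq_top_iff]
        rintro y -
        obtain ⟨u, hu⟩ := hGsurj y
        exact ⟨⟨(u : E), u.2⟩, hu⟩
      have hkerne : LinearMap.ker h' ≠ ⊥ := by
        rw [Submodule.ne_bot_iff]
        refine ⟨⟨(z : E), z.2⟩, ?_, ?_⟩
        · show g (z : E) = 0
          exact hgz
        · intro hb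
          apply hz0
          apply Subtype.ext
          have := congrArg Subtype.val hb
          simpa using this
      haveI : Nontrivial ↥(LinearMap.ker h') := Submodule.nontrivial_iff_ne_bot.mpr hkerne
      have hkpos : 0 < Module.finrank k ↥(LinearMap.ker h') := Module.finrank_pos_iff.mpr this
      rw [hrange, finrank_top] at h1
      omega
    have hji : j ≠ i := fun hc => hij hc.symm
    have hdisjij : Disjoint (V i) (V j) := by
      apply (hdisjs i).mono_right
      exact le_iSup (fun s : {s : Fin r // s ≠ i} => V (s : Fin r)) ⟨j, hji⟩
    have hinfk : ((V i).restrictScalars k) ⊓ ((V j).restrictScalars k) = ⊥ := by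
      rw [Submodule.eq_bot_iff]
      intro x hx
      exact (Submodule.disjoint_def.mp hdisjij) x hx.1 hx.2
    have h2 := Submodule.finrank_sup_add_finrank_inf_eq
      ((V i).restrictScalars k) ((V j).restrictScalars k)
    rw [hinfk, finrank_bot, add_zero] at h2
    have h3 : Module.finrank k ↥((V i).restrictScalars k ⊔ (V j).restrictScalars k)
        ≤ Module.finrank k E := Submodule.finrank_le _
    omega
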